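/- Let f : V → V and h : W → W be expansive ℕ-actions on compact metric spaces with fixed points v₀, w₀ respectively. Then the induced map f ∧ h on the smash product V ∧ W (with base points v₀, w₀) defines an expansive ℕ²-action: there exists ε > 0 (for a suitable metric on V ∧ W) such that any two distinct points of V ∧ W are separated to distance > ε by some (f^{n₁} ∧ h^{n₂}). -/

import Mathlib

/-- The setoid on `V × W` defining the smash product `V ∧ W` with base points
`v₀, w₀`: all points of the wedge `V × {w₀} ∪ {v₀} × W` are identified. -/
def smashSetoid {V W : Type*} (v₀ : V) (w₀ : W) : Setoid (V × W) where
  r p q := p = q ∨ ((p.1 = v₀ ∨ p.2 = w₀) ∧ (q.1 = v₀ ∨ q.2 = w₀))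
  iseqv := by
    refine ⟨fun p => Or.inl rfl, ?_, ?_⟩
    · rintro p q (rfl | h)
      · exact Or.inl rfl
      · exact Or.inr ⟨h.2, h.1⟩
    · rintro p q r (rfl | h) (rfl | h')
      · exact Or.inl rfl
      · exact Or.inr h'
      · exact Or.inr h
      · exact Or.inr ⟨h.1, h'.2⟩

/-- The smash product `V ∧ W`, as a topological quotient of `V × W`. -/
def SmashProd {V W : Type*} [TopologicalSpace V] [TopologicalSpace W]
    (v₀ : V) (w₀ : W) : Type _ :=
  Quotient (smashSetoid v₀ w₀)

instance {V W : Type*} [TopologicalSpace V] [TopologicalSpace W] (v₀ : V) (w₀ : W) :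
    TopologicalSpace (SmashProd v₀ w₀) :=
  instTopologicalSpaceQuotient

section Helpers

variable {V W : Type*} [MetricSpace V] [MetricSpace W] (v₀ : V) (w₀ : W)

/-- Distance from a point of `V × W` to the wedge, in the sup metric. -/
def sRho (p : V × W) : ℝ := min (dist p.1 v₀) (dist p.2 w₀)

/-- The distance on `V × W` defining the quotient metric on the smash product. -/
def sDist (p q : V × W) : ℝ := min (dist p q) (sRho v₀ w₀ p + sRho v₀ w₀ q)

lemma sRho_nonneg (p : V × W) : 0 ≤ sRho v₀ w₀ p := le_min dist_nonneg dist_nonneg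

lemma sRho_eq_zero {p : V × W} (hp : p.1 = v₀ ∨ p.2 = w₀) : sRho v₀ w₀ p = 0 := by
  rcases hp with hp | hp
  · exact le_antisymm (le_trans (min_le_left _ _) (by simp [hp])) (sRho_nonneg _ _ _)
  · exact le_antisymm (le_trans (min_le_right _ _) (by simp [hp])) (sRho_nonneg _ _ _)

lemma sRho_le_dist {q : V × W} (p : V × W) (hq : q.1 = v₀ ∨ q.2 = w₀) :
    sRho v₀ w₀ p ≤ dist p q := by
  rcases hq with hq | hq
  · calc sRho v₀ w₀ p ≤ dist p.1 v₀ := min_le_left _ _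
      _ = dist p.1 q.1 := by rw [hq]
      _ ≤ dist p q := by rw [Prod.dist_eq]; exact le_max_left _ _
  · calc sRho v₀ w₀ p ≤ dist p.2 w₀ := min_le_right _ _
      _ = dist p.2 q.2 := by rw [hq]
      _ ≤ dist p q := by rw [Prod.dist_eq]; exact le_max_right _ _

lemma sRho_lip (p q : V × W) : sRho v₀ w₀ p ≤ dist p q + sRho v₀ w₀ q := by
  rcases le_total (dist q.1 v₀) (dist q.2 w₀) with hq | hq
  · calc sRho v₀ w₀ p ≤ dist p.1 v₀ := min_le_left _ _
      _ ≤ dist p.1 q.1 + dist q.1 v₀ := dist_triangle _ _ _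
      _ ≤ dist p q + sRho v₀ w₀ q := by
          rw [sRho, min_eq_left hq, Prod.dist_eq]
          exact add_le_add (le_max_left _ _) le_rfl
  · calc sRho v₀ w₀ p ≤ dist p.2 w₀ := min_le_right _ _
      _ ≤ dist p.2 q.2 + dist q.2 w₀ := dist_triangle _ _ _
      _ ≤ dist p q + sRho v₀ w₀ q := by
          rw [sRho, min_eq_right hq, Prod.dist_eq]
          exact add_le_add (le_max_right _ _) le_rfl

lemma sDist_nonneg (p q : V × W) : 0 ≤ sDist v₀ w₀ p q :=
  le_min dist_nonneg (add_nonneg (sRho_nonneg _ _ _) (sRho_nonneg _ _ _))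

lemma sDist_self (p : V × W) : sDist v₀ w₀ p p = 0 :=
  le_antisymm (le_trans (min_le_left _ _) (by simp)) (sDist_nonneg _ _ _ _)

lemma sDist_comm (p q : V × W) : sDist v₀ w₀ p q = sDist v₀ w₀ q p := by
  rw [sDist, sDist, dist_comm, add_comm]

lemma sDist_triangle (p q r : V × W) :
    sDist v₀ w₀ p r ≤ sDist v₀ w₀ p q + sDist v₀ w₀ q r := by
  rcases le_total (dist p q) (sRho v₀ w₀ p + sRho v₀ w₀ q) with h1 | h1 <;>
    rcases le_total (dist q r) (sRho v₀ w₀ q + sRho v₀ w₀ r) with h2 | h2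
  · rw [sDist, sDist, sDist, min_eq_left h1, min_eq_left h2]
    exact le_trans (min_le_left _ _) (dist_triangle _ _ _)
  · rw [sDist, sDist, sDist, min_eq_left h1, min_eq_right h2]
    refine le_trans (min_le_right _ _) ?_
    have := sRho_lip v₀ w₀ p q
    linarith
  · rw [sDist, sDist, sDist, min_eq_right h1, min_eq_left h2]
    refine le_trans (min_le_right _ _) ?_
    have := sRho_lip v₀ w₀ r q
    rw [dist_comm q r]
    linarith
  · rw [sDist, sDist, sDist, min_eq_right h1, min_eq_right h2]
    refine le_trans (min_le_right _ _) ?_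
    have := sRho_nonneg v₀ w₀ q
    linarith

lemma sDist_eq_zero {p q : V × W} (h : sDist v₀ w₀ p q = 0) : (smashSetoid v₀ w₀).r p q := by
  rcases min_eq_iff.mp h with ⟨h0, _⟩ | ⟨h0, _⟩
  · exact Or.inl (dist_eq_zero.mp h0)
  · have h1 : sRho v₀ w₀ p = 0 :=
      le_antisymm (by nlinarith [sRho_nonneg v₀ w₀ p, sRho_nonneg v₀ w₀ q]) (sRho_nonneg _ _ _)
    have h2 : sRho v₀ w₀ q = 0 :=
      le_antisymm (by nlinarith [sRho_nonneg v₀ w₀ p, sRho_nonneg v₀ w₀ q]) (sRho_nonneg _ _ _)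
    refine Or.inr ⟨?_, ?_⟩
    · rcases min_eq_iff.mp h1 with ⟨hz, _⟩ | ⟨hz, _⟩
      · exact Or.inl (dist_eq_zero.mp hz)
      · exact Or.inr (dist_eq_zero.mp hz)
    · rcases min_eq_iff.mp h2 with ⟨hz, _⟩ | ⟨hz, _⟩
      · exact Or.inl (dist_eq_zero.mp hz)
      · exact Or.inr (dist_eq_zero.mp hz)

lemma sDist_congr_left {p p' : V × W} (q : V × W) (h : (smashSetoid v₀ w₀).r p p') :
    sDist v₀ w₀ p q = sDist v₀ w₀ p' q := by
  rcases h with rfl | ⟨hp, hp'⟩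
  · rfl
  · have e1 : sDist v₀ w₀ p q = sRho v₀ w₀ q := by
      rw [sDist, sRho_eq_zero v₀ w₀ hp, zero_add,
        min_eq_right (by rw [dist_comm]; exact sRho_le_dist v₀ w₀ q hp)]
    have e2 : sDist v₀ w₀ p' q = sRho v₀ w₀ q := by
      rw [sDist, sRho_eq_zero v₀ w₀ hp', zero_add,
        min_eq_right (by rw [dist_comm]; exact sRho_le_dist v₀ w₀ q hp')]
    rw [e1, e2]

lemma sDist_congr {p p' q q' : V × W} (hp : (smashSetoid v₀ w₀).r p p')
    (hq : (smashSetoid v₀ w₀).r q q') : sDist v₀ w₀ p q = sDist v₀ w₀ p' q' := by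
  rw [sDist_congr_left v₀ w₀ q hp, sDist_comm, sDist_congr_left v₀ w₀ p' hq, sDist_comm]

/-- The quotient metric on the smash product. -/
def smashMS : MetricSpace (SmashProd v₀ w₀) where
  dist := Quotient.lift₂ (sDist v₀ w₀) (fun _ _ _ _ hp hq => sDist_congr v₀ w₀ hp hq)
  dist_self := fun x => Quotient.inductionOn x (fun p => sDist_self v₀ w₀ p)
  dist_comm := fun x y => Quotient.inductionOn₂ x y (fun p q => sDist_comm v₀ w₀ p q)
  dist_triangle := fun x y z =>
    Quotient.inductionOn₃ x y z (fun p q r => sDist_triangle v₀ w₀ p q r)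
  eq_of_dist_eq_zero := by
    intro x y
    refine Quotient.inductionOn₂ x y (fun p q h => ?_)
    exact Quotient.sound (sDist_eq_zero v₀ w₀ h)

lemma smashMS_dist (p q : V × W) :
    @dist _ (smashMS v₀ w₀).toPseudoMetricSpace.toDist
      (Quotient.mk (smashSetoid v₀ w₀) p) (Quotient.mk (smashSetoid v₀ w₀) q)
      = sDist v₀ w₀ p q := rfl

lemma smashMS_topology [CompactSpace V] [CompactSpace W] :
    (smashMS v₀ w₀).toUniformSpace.toTopologicalSpace =
      (instTopologicalSpaceQuotient : TopologicalSpace (SmashProd v₀ w₀)) := by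
  set t₂ := (smashMS v₀ w₀).toUniformSpace.toTopologicalSpace with ht₂
  set t₁ := (instTopologicalSpaceQuotient : TopologicalSpace (SmashProd v₀ w₀)) with ht₁
  have cont_mk : @Continuous (V × W) (SmashProd v₀ w₀) _ t₂
      (Quotient.mk (smashSetoid v₀ w₀)) := by
    refine (@Metric.continuous_iff _ _ _ (smashMS v₀ w₀).toPseudoMetricSpace _).mpr ?_
    intro b ε hε
    refine ⟨ε, hε, fun a hab => ?_⟩
    calc @dist _ (smashMS v₀ w₀).toPseudoMetricSpace.toDist _ _
        = sDist v₀ w₀ a b := rfl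
      _ ≤ dist a b := min_le_left _ _
      _ < ε := hab
  have h₁ : @Continuous _ _ t₁ t₂ id := continuous_coinduced_dom.mpr cont_mk
  haveI ht2 : @T2Space _ t₂ := by
    letI := smashMS v₀ w₀
    haveI : @T0Space _ t₂ := @MetricSpace.instT0Space _ (smashMS v₀ w₀)
    infer_instance
  have h₂ : @Continuous _ _ t₂ t₁ id := by
    refine (@continuous_iff_isClosed _ _ t₂ t₁ id).mpr (fun s hs => ?_)
    have hc : IsCompact s := hs.isCompact
    have hc2 : @IsCompact _ t₂ s := by
      have := @IsCompact.image _ _ t₁ t₂ s id hc h₁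
      exact (Set.image_id s) ▸ this
    have : @IsClosed _ t₂ s := @IsCompact.isClosed _ t₂ ht2 _ hc2
    exact this
  exact le_antisymm (continuous_id_iff_le.mp h₂) (continuous_id_iff_le.mp h₁)

end Helpers

section Sep

variable {V W : Type*} [MetricSpace V] [MetricSpace W]

lemma smash_sep (f : V → V) (h : W → W) (v₀ : V) (w₀ : W)
    (hfv₀ : f v₀ = v₀) (hhw₀ : h w₀ = w₀)
    (cV : ℝ) (hcV : 0 < cV) (cW : ℝ) (hcW : 0 < cW)
    (hfe : ∀ u v : V, u ≠ v → ∃ n : ℕ, cV < dist (f^[n] u) (f^[n] v))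
    (hhe : ∀ u v : W, u ≠ v → ∃ n : ℕ, cW < dist (h^[n] u) (h^[n] v))
    (p q : V × W) (hp1 : p.1 ≠ v₀) (hp2 : p.2 ≠ w₀)
    (hne : ¬ (smashSetoid v₀ w₀).r p q) :
    ∃ n₁ n₂ : ℕ, min cV cW / 4 <
      sDist v₀ w₀ (f^[n₁] p.1, h^[n₂] p.2) (f^[n₁] q.1, h^[n₂] q.2) := by
  set c := min cV cW with hcdef
  have hc : 0 < c := lt_min hcV hcW
  have hcV' : c ≤ cV := min_le_left _ _
  have hcW' : c ≤ cW := min_le_right _ _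
  obtain ⟨a, ha⟩ := hfe p.1 v₀ hp1
  rw [Function.iterate_fixed hfv₀] at ha
  obtain ⟨b, hb⟩ := hhe p.2 w₀ hp2
  rw [Function.iterate_fixed hhw₀] at hb
  by_cases hq : sRho v₀ w₀ (f^[a] q.1, h^[b] q.2) < c / 2
  · refine ⟨a, b, ?_⟩
    have hρp : c < sRho v₀ w₀ (f^[a] p.1, h^[b] p.2) :=
      lt_min (lt_of_le_of_lt hcV' ha) (lt_of_le_of_lt hcW' hb)
    have hlip := sRho_lip v₀ w₀ (f^[a] p.1, h^[b] p.2) (f^[a] q.1, h^[b] q.2)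
    have hρq0 := sRho_nonneg v₀ w₀ (f^[a] q.1, h^[b] q.2)
    refine lt_min (by linarith) (by linarith)
  · push_neg at hq
    have hAq : c / 2 ≤ dist (f^[a] q.1) v₀ := le_trans hq (min_le_left _ _)
    have hBq : c / 2 ≤ dist (h^[b] q.2) w₀ := le_trans hq (min_le_right _ _)
    have hq1 : q.1 ≠ v₀ := by
      intro e
      rw [e, Function.iterate_fixed hfv₀, dist_self] at hAq
      linarith
    have hq2 : q.2 ≠ w₀ := by
      intro e
      rw [e, Function.iterate_fixed hhw₀, dist_self] at hBq
      linarith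
    have hpq : p ≠ q := fun e => hne (Or.inl e)
    have hcoord : p.1 ≠ q.1 ∨ p.2 ≠ q.2 := by
      by_contra hcon
      push_neg at hcon
      exact hpq (Prod.ext hcon.1 hcon.2)
    rcases hcoord with hne1 | hne2
    · obtain ⟨n₁, hd1⟩ := hfe p.1 q.1 hne1
      refine ⟨n₁, b, ?_⟩
      have hfst : dist (f^[n₁] p.1) (f^[n₁] q.1) ≤
          dist ((f^[n₁] p.1, h^[b] p.2) : V × W) (f^[n₁] q.1, h^[b] q.2) := by
        rw [Prod.dist_eq]; exact le_max_left _ _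
      refine lt_min (by linarith) ?_
      have hAsum : dist (f^[n₁] p.1) (f^[n₁] q.1) ≤
          dist (f^[n₁] p.1) v₀ + dist (f^[n₁] q.1) v₀ := by
        rw [dist_comm (f^[n₁] q.1) v₀]; exact dist_triangle _ _ _
      rcases le_total (c / 2) (dist (f^[n₁] q.1) v₀) with hA | hA
      · have h1 : c / 2 ≤ sRho v₀ w₀ ((f^[n₁] q.1, h^[b] q.2) : V × W) := le_min hA hBq
        have h0 := sRho_nonneg v₀ w₀ ((f^[n₁] p.1, h^[b] p.2) : V × W)
        linarith
      · have h1 : c / 2 < sRho v₀ w₀ ((f^[n₁] p.1, h^[b] p.2) : V × W) :=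
          lt_min (by linarith) (by linarith)
        have h0 := sRho_nonneg v₀ w₀ ((f^[n₁] q.1, h^[b] q.2) : V × W)
        linarith
    · obtain ⟨n₂, hd2⟩ := hhe p.2 q.2 hne2
      refine ⟨a, n₂, ?_⟩
      have hsnd : dist (h^[n₂] p.2) (h^[n₂] q.2) ≤
          dist ((f^[a] p.1, h^[n₂] p.2) : V × W) (f^[a] q.1, h^[n₂] q.2) := by
        rw [Prod.dist_eq]; exact le_max_right _ _
      refine lt_min (by linarith) ?_
      have hBsum : dist (h^[n₂] p.2) (h^[n₂] q.2) ≤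
          dist (h^[n₂] p.2) w₀ + dist (h^[n₂] q.2) w₀ := by
        rw [dist_comm (h^[n₂] q.2) w₀]; exact dist_triangle _ _ _
      rcases le_total (c / 2) (dist (h^[n₂] q.2) w₀) with hB | hB
      · have h1 : c / 2 ≤ sRho v₀ w₀ ((f^[a] q.1, h^[n₂] q.2) : V × W) := le_min hAq hB
        have h0 := sRho_nonneg v₀ w₀ ((f^[a] p.1, h^[n₂] p.2) : V × W)
        linarith
      · have h1 : c / 2 < sRho v₀ w₀ ((f^[a] p.1, h^[n₂] p.2) : V × W) :=
          lt_min (by linarith) (by linarith)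
        have h0 := sRho_nonneg v₀ w₀ ((f^[a] q.1, h^[n₂] q.2) : V × W)
        linarith

end Sep

/-- If `f : V → V` and `h : W → W` are expansive `ℕ`-actions on compact metric
spaces fixing base points `v₀, w₀`, then the induced `ℕ²`-action
`(n₁, n₂) ↦ f^{n₁} ∧ h^{n₂}` on the smash product `V ∧ W` is expansive for a
suitable metric on `V ∧ W` inducing the quotient topology: some `ε > 0`
separates any two distinct points of `V ∧ W` under some iterate. -/
theorem smash_expansive {V W : Type*} [MetricSpace V] [CompactSpace V]
    [MetricSpace W] [CompactSpace W]
    (f : V → V) (hf : Continuous f) (h : W → W) (hh : Continuous h)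
    (v₀ : V) (w₀ : W) (hfv₀ : f v₀ = v₀) (hhw₀ : h w₀ = w₀)
    (cV : ℝ) (hcV : 0 < cV) (cW : ℝ) (hcW : 0 < cW)
    (hfe : ∀ u v : V, u ≠ v → ∃ n : ℕ, cV < dist (f^[n] u) (f^[n] v))
    (hhe : ∀ u v : W, u ≠ v → ∃ n : ℕ, cW < dist (h^[n] u) (h^[n] v)) :
    ∃ m : MetricSpace (SmashProd v₀ w₀),
      m.toUniformSpace.toTopologicalSpace = instTopologicalSpaceQuotient ∧
      ∃ ε : ℝ, 0 < ε ∧ ∀ p q : V × W, ¬ (smashSetoid v₀ w₀).r p q →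
        ∃ n₁ n₂ : ℕ, ε <
          @dist (SmashProd v₀ w₀) m.toPseudoMetricSpace.toDist
            (Quotient.mk (smashSetoid v₀ w₀) (f^[n₁] p.1, h^[n₂] p.2))
            (Quotient.mk (smashSetoid v₀ w₀) (f^[n₁] q.1, h^[n₂] q.2)) := by
  refine ⟨smashMS v₀ w₀, smashMS_topology v₀ w₀, min cV cW / 4,
    by positivity, fun p q hne => ?_⟩
  by_cases hwp : p.1 = v₀ ∨ p.2 = w₀
  · have hwq : ¬(q.1 = v₀ ∨ q.2 = w₀) := fun hwq => hne (Or.inr ⟨hwp, hwq⟩)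
    push_neg at hwq
    have hne' : ¬ (smashSetoid v₀ w₀).r q p := fun hr => hne ((smashSetoid v₀ w₀).symm hr)
    obtain ⟨n₁, n₂, hlt⟩ := smash_sep f h v₀ w₀ hfv₀ hhw₀ cV hcV cW hcW hfe hhe
      q p hwq.1 hwq.2 hne'
    refine ⟨n₁, n₂, ?_⟩
    rw [smashMS_dist, sDist_comm]
    exact hlt
  · push_neg at hwp
    obtain ⟨n₁, n₂, hlt⟩ := smash_sep f h v₀ w₀ hfv₀ hhw₀ cV hcV cW hcW hfe hhe
      p q hwp.1 hwp.2 hne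
    exact ⟨n₁, n₂, hlt⟩
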